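/- Let k ≥ 2 and let T be a tree with exactly k pendant vertices. Then Sd_k(T) ≤ d + (k − 2)·⌊d/2⌋, where d = diam(T) is the diameter of T. -/

import Mathlib

open SimpleGraph

/-- The Steiner distance of a vertex set `S` in `G`: the minimum number of edges of a
connected subgraph of `G` whose vertex set contains `S`. -/
noncomputable def steinerDist {V : Type*} (G : SimpleGraph V) (S : Finset V) : ℕ :=
  sInf {n | ∃ H : G.Subgraph, H.Connected ∧ ↑S ⊆ H.verts ∧ H.edgeSet.ncard = n}

/-- The Steiner `k`-diameter of `G`: the maximum Steiner distance over `k`-subsets. -/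
noncomputable def steinerDiam {V : Type*} [Fintype V] [DecidableEq V]
    (G : SimpleGraph V) (k : ℕ) : ℕ :=
  Finset.sup (Finset.univ.filter fun S : Finset V => S.card = k) (steinerDist G)

/-- The Steiner `(k,k')`-eccentricity of a `k'`-subset `S'`. -/
noncomputable def steinerEcc {V : Type*} [Fintype V] [DecidableEq V]
    (G : SimpleGraph V) (k : ℕ) (S' : Finset V) : ℕ :=
  Finset.sup (Finset.univ.filter fun S : Finset V => S.card = k ∧ S' ⊆ S) (steinerDist G)

/-- The Steiner `(k,k')`-radius of `G`. -/
noncomputable def steinerRadius {V : Type*} [Fintype V] [DecidableEq V]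
    (G : SimpleGraph V) (k k' : ℕ) : ℕ :=
  sInf {n | ∃ S' : Finset V, S'.card = k' ∧ steinerEcc G k S' = n}

/-- The diameter of `G`: the maximum distance between two vertices. -/
noncomputable def gDiam {V : Type*} [Fintype V] (G : SimpleGraph V) : ℕ :=
  Finset.sup Finset.univ (fun p : V × V => G.dist p.1 p.2)

/-- The number of pendant vertices (leaves) of `G`. -/
noncomputable def leafCount {V : Type*} [Fintype V] [DecidableEq V]
    (G : SimpleGraph V) [DecidableRel G.Adj] : ℕ :=
  (Finset.univ.filter fun v => G.degree v = 1).card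

namespace SteinerAux

variable {V : Type*} {G : SimpleGraph V}

lemma path_length_eq (hA : G.IsAcyclic) {u v : V} (p : G.Walk u v) (hp : p.IsPath) :
    p.length = G.dist u v := by
  obtain ⟨q, hq, hql⟩ := (Reachable.exists_path_of_dist ⟨p⟩)
  have h2 : (⟨p, hp⟩ : G.Path u v) = ⟨q, hq⟩ := hA.path_unique _ _
  rw [show p = q from congrArg Subtype.val h2, hql]

lemma split_first {u v : V} (W : G.Walk u v) (Pset : Set V) (hv : v ∈ Pset) :
    ∃ (m : V) (W₁ : G.Walk u m) (W₂ : G.Walk m v),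
      W = W₁.append W₂ ∧ m ∈ Pset ∧ ∀ x ∈ W₁.support, x ∈ Pset → x = m := by
  classical
  induction W with
  | nil => exact ⟨_, Walk.nil, Walk.nil, rfl, hv, by simp⟩
  | @cons u u' v h W ih =>
    by_cases hu : u ∈ Pset
    · exact ⟨u, Walk.nil, Walk.cons h W, rfl, hu, by simp⟩
    · obtain ⟨m, W₁, W₂, hW, hm, hAll⟩ := ih hv
      refine ⟨m, Walk.cons h W₁, W₂, by rw [Walk.cons_append, hW], hm, ?_⟩
      intro x hx hxP
      rw [Walk.support_cons] at hx
      rcases List.mem_cons.mp hx with rfl | h2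
      · exact absurd hxP hu
      · exact hAll x h2 hxP

lemma isPath_append {u m v : V} {p : G.Walk u m} {q : G.Walk m v}
    (hp : p.IsPath) (hq : q.IsPath)
    (hint : ∀ x, x ∈ p.support → x ∈ q.support → x = m) : (p.append q).IsPath := by
  rw [Walk.isPath_def, Walk.support_append]
  have hqn := hq.support_nodup
  rw [q.support_eq_cons, List.nodup_cons] at hqn
  refine List.Nodup.append hp.support_nodup hqn.2 ?_
  intro x hxp hxq
  have hx : x ∈ q.support := List.tail_subset _ hxq
  have := hint x hxp hx
  subst this
  exact hqn.1 hxq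


lemma leaf_of_dist_max [Fintype V] [DecidableEq V] [DecidableRel G.Adj]
    (hT : G.IsTree) {d : ℕ} (hdle : ∀ u v : V, G.dist u v ≤ d)
    {x y : V} (hxy : G.dist x y = d) (hd1 : 1 ≤ d) : G.degree y = 1 := by
  classical
  obtain ⟨Q, hQ, hQl⟩ := hT.isConnected.exists_path_of_dist x y
  rw [hxy] at hQl
  have hne : x ≠ y := by
    rintro rfl
    rw [SimpleGraph.dist_self] at hxy
    omega
  obtain ⟨p, hadj, R', hrev⟩ := Walk.exists_eq_cons_of_ne (Ne.symm hne) Q.reverse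
  have hRpath : (Walk.cons hadj R').IsPath := hrev ▸ hQ.reverse
  have key : ∀ w, G.Adj y w → w = p := by
    intro w hw
    obtain ⟨W, hW, hWl⟩ := hT.isConnected.exists_path_of_dist x w
    by_cases hyW : y ∈ W.support
    · exfalso
      have ht : (W.takeUntil y hyW).length = d := by
        rw [path_length_eq hT.2 _ (hW.takeUntil hyW), hxy]
      have hdr : (W.dropUntil y hyW).length ≠ 0 :=
        fun h0 => hw.ne (Walk.eq_of_length_eq_zero h0)
      have hsum : (W.takeUntil y hyW).length + (W.dropUntil y hyW).length = W.length := by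
        rw [← Walk.length_append, Walk.take_spec]
      have hWd : W.length ≤ d := hWl ▸ hdle x w
      omega
    · have hwy : w ≠ y := fun h => hyW (h ▸ W.end_mem_support)
      have hW' : (W.concat hw.symm).IsPath := by
        rw [Walk.concat_eq_append]
        refine isPath_append hW (by
          rw [Walk.cons_isPath_iff]
          exact ⟨Walk.IsPath.nil, by simp [hwy]⟩) ?_
        intro z hz hz'
        rw [Walk.support_cons, Walk.support_nil, List.mem_cons, List.mem_singleton] at hz'
        rcases hz' with rfl | rfl
        · rfl
        · exact absurd hz hyW
      have hEq : W.concat hw.symm = Q :=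
        congrArg Subtype.val (hT.2.path_unique ⟨W.concat hw.symm, hW'⟩ ⟨Q, hQ⟩)
      have hrev2 : Walk.cons (hw.symm.symm) W.reverse = Walk.cons hadj R' := by
        rw [← Walk.reverse_concat W hw.symm, hEq, hrev]
      have hsup := congrArg Walk.support hrev2
      rw [Walk.support_cons, Walk.support_cons] at hsup
      have hsup2 : W.reverse.support = R'.support := by
        exact List.tail_eq_of_cons_eq hsup
      have h1 : W.reverse.support = w :: W.reverse.support.tail := Walk.support_eq_cons _
      have h2 : R'.support = p :: R'.support.tail := Walk.support_eq_cons _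
      rw [h1, h2] at hsup2
      exact List.head_eq_of_cons_eq hsup2
  have hset : G.neighborFinset y = {p} := by
    ext w
    simp only [SimpleGraph.mem_neighborFinset, Finset.mem_singleton]
    exact ⟨key w, fun h => h ▸ hadj⟩
  rw [← SimpleGraph.card_neighborFinset_eq_degree, hset, Finset.card_singleton]

lemma exists_leaf_path [Fintype V] [DecidableEq V] [DecidableRel G.Adj]
    (hT : G.IsTree) (hcard : 2 ≤ Fintype.card V) (a v : V) :
    ∃ ℓ, G.degree ℓ = 1 ∧ ∃ (P : G.Walk a ℓ), P.IsPath ∧ v ∈ P.support := by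
  classical
  have pth : ∀ w, ∃ P : G.Walk a w, P.IsPath := fun w => (hT.existsUnique_path a w).exists
  choose P hP using pth
  set F := Finset.univ.filter (fun u => v ∈ (P u).support) with hF
  have hvF : v ∈ F := by
    simp only [hF, Finset.mem_filter, Finset.mem_univ, true_and]
    exact Walk.end_mem_support _
  obtain ⟨ℓ, hℓF, hmax⟩ := Finset.exists_max_image F (fun u => G.dist a u) ⟨v, hvF⟩
  have hℓv : v ∈ (P ℓ).support := by
    simpa only [hF, Finset.mem_filter, Finset.mem_univ, true_and] using hℓF
  refine ⟨ℓ, ?_, P ℓ, hP ℓ, hℓv⟩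
  -- aux: no fresh neighbor
  have aux : ∀ w, G.Adj ℓ w → w ∉ (P ℓ).support → False := by
    intro w hw hwS
    have hW' : ((P ℓ).concat hw).IsPath := by
      rw [Walk.concat_eq_append]
      refine isPath_append (hP ℓ) (by
        rw [Walk.cons_isPath_iff]
        exact ⟨Walk.IsPath.nil, by simp [hw.ne]⟩) ?_
      intro z hz hz'
      rw [Walk.support_cons, Walk.support_nil, List.mem_cons, List.mem_singleton] at hz'
      rcases hz' with rfl | rfl
      · rfl
      · exact absurd hz hwS
    have hEq : P w = (P ℓ).concat hw :=
      congrArg Subtype.val (hT.2.path_unique ⟨P w, hP w⟩ ⟨(P ℓ).concat hw, hW'⟩)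
    have hwF : w ∈ F := by
      simp only [hF, Finset.mem_filter, Finset.mem_univ, true_and, hEq, Walk.support_concat,
        List.concat_eq_append, List.mem_append]
      exact Or.inl hℓv
    have h1 : G.dist a w ≤ G.dist a ℓ := hmax w hwF
    have h2 : G.dist a w = G.dist a ℓ + 1 := by
      rw [← path_length_eq hT.2 _ (hP w), ← path_length_eq hT.2 _ (hP ℓ), hEq,
        Walk.length_concat]
    omega
  -- some neighbor of ℓ exists
  have hnontriv : Nontrivial V := Fintype.one_lt_card_iff_nontrivial.mp hcard
  obtain ⟨u, hu⟩ := exists_ne ℓ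
  obtain ⟨Wu, hWu, _⟩ := hT.isConnected.exists_path_of_dist ℓ u
  obtain ⟨w₀, hw₀, _, _⟩ := Walk.exists_eq_cons_of_ne (Ne.symm hu) Wu
  have hdeg1 : 0 < G.degree ℓ :=
    (SimpleGraph.degree_pos_iff_exists_adj G ℓ).mpr ⟨w₀, hw₀⟩
  by_contra hdeg
  have hdeg2 : 2 ≤ G.degree ℓ := by omega
  by_cases hℓa : ℓ = a
  · subst hℓa
    have hnil : P ℓ = Walk.nil := Walk.isPath_iff_eq_nil.mp (hP ℓ)
    exact aux w₀ hw₀ (by rw [hnil, Walk.support_nil]; simp [hw₀.ne'])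
  · obtain ⟨p, hadj, R', hrev⟩ :=
      Walk.exists_eq_cons_of_ne hℓa (P ℓ).reverse
    have hRpath : (Walk.cons hadj R').IsPath := hrev ▸ (hP ℓ).reverse
    rw [Walk.cons_isPath_iff] at hRpath
    obtain ⟨w, hwN, hwp⟩ := Finset.exists_mem_ne (by omega : 1 < G.degree ℓ) p
    rw [SimpleGraph.mem_neighborFinset] at hwN
    refine aux w hwN ?_
    intro hwS
    have hwR : w ∈ R'.support := by
      have : w ∈ (P ℓ).reverse.support := by
        rw [Walk.support_reverse, List.mem_reverse]; exact hwS
      rw [hrev, Walk.support_cons, List.mem_cons] at this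
      rcases this with h | h
      · exact absurd h.symm hwN.ne
      · exact h
    have hcons : (Walk.cons hadj (R'.takeUntil w hwR)).IsPath := by
      rw [Walk.cons_isPath_iff]
      exact ⟨hRpath.1.takeUntil hwR,
        fun h => hRpath.2 (Walk.support_takeUntil_subset _ hwR h)⟩
    have hlen : (Walk.cons hadj (R'.takeUntil w hwR)).length = G.dist ℓ w :=
      path_length_eq hT.2 _ hcons
    have hd1 : G.dist ℓ w ≤ 1 := SimpleGraph.dist_le (Walk.cons hwN Walk.nil)
    rw [Walk.length_cons] at hlen
    have : (R'.takeUntil w hwR).length = 0 := by omega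
    exact hwp (Walk.eq_of_length_eq_zero this).symm

end SteinerAux

open SteinerAux in
theorem stmt6 {V : Type*} [Fintype V] [DecidableEq V] (G : SimpleGraph V)
    [DecidableRel G.Adj] (hT : G.IsTree) (k : ℕ) (hk : 2 ≤ k)
    (hleaves : leafCount G = k) :
    steinerDiam G k ≤ gDiam G + (k - 2) * (gDiam G / 2) := by
  classical
  have hconn := hT.isConnected
  have hacyc := hT.2
  set d := gDiam G with hdd
  set L := Finset.univ.filter (fun v => G.degree v = 1) with hLdef
  have hL : L.card = k := hleaves
  obtain ⟨x0, y0, hx0, hy0, hxyne⟩ := Finset.one_lt_card_iff.mp (by omega : 1 < L.card)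
  have hnontriv : Nontrivial V := ⟨⟨x0, y0, hxyne⟩⟩
  have hcard2 : 2 ≤ Fintype.card V := Fintype.one_lt_card
  have huniv : (Finset.univ : Finset (V × V)).Nonempty := Finset.univ_nonempty
  obtain ⟨⟨a, b⟩, -, hab⟩ :=
    Finset.exists_mem_eq_sup (Finset.univ : Finset (V × V)) huniv
      (fun p : V × V => G.dist p.1 p.2)
  have hdle : ∀ u v : V, G.dist u v ≤ d := fun u v =>
    Finset.le_sup (f := fun p : V × V => G.dist p.1 p.2) (Finset.mem_univ (u, v))
  have hdab : G.dist a b = d := hab.symm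
  have hd1 : 1 ≤ d := le_trans (hconn.pos_dist_of_ne hxyne) (hdle x0 y0)
  have hanb : a ≠ b := by
    rintro rfl; rw [SimpleGraph.dist_self] at hdab; omega
  have hbleaf : G.degree b = 1 := leaf_of_dist_max hT hdle hdab hd1
  have haleaf : G.degree a = 1 :=
    leaf_of_dist_max hT hdle (by rwa [SimpleGraph.dist_comm]) hd1
  obtain ⟨Q, hQ, hQl⟩ := hconn.exists_path_of_dist a b
  rw [hdab] at hQl
  set SB := Q.support.toFinset with hSBdef
  have haSB : a ∈ SB := List.mem_toFinset.mpr Q.start_mem_support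
  have hSBcard : SB.card = d + 1 := by
    rw [hSBdef, List.toFinset_card_of_nodup hQ.support_nodup, Walk.length_support, hQl]
  -- key per-path bound
  have key : ∀ (ℓ : V) (P : G.Walk a ℓ), P.IsPath →
      (P.support.toFinset \ SB).card ≤ d / 2 := by
    intro ℓ P hP
    obtain ⟨m, R₁, R₂, hsplit, hmSB, hfirst⟩ :=
      split_first P.reverse (↑SB : Set V) (Finset.mem_coe.mpr haSB)
    have hPrev : (R₁.append R₂).IsPath := hsplit ▸ hP.reverse
    have hR1 : R₁.IsPath := Walk.IsPath.of_append_left hPrev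
    have hR2 : R₂.IsPath := Walk.IsPath.of_append_right hPrev
    have hmQ : m ∈ Q.support := List.mem_toFinset.mp (Finset.mem_coe.mp hmSB)
    have hQTD : (Q.takeUntil m hmQ).length + (Q.dropUntil m hmQ).length = d := by
      rw [← Walk.length_append, Walk.take_spec]; exact hQl
    have hR2eq : R₂ = (Q.takeUntil m hmQ).reverse :=
      congrArg Subtype.val
        (hacyc.path_unique ⟨R₂, hR2⟩ ⟨(Q.takeUntil m hmQ).reverse, (hQ.takeUntil hmQ).reverse⟩)
    have hR2len : R₂.length = (Q.takeUntil m hmQ).length := by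
      rw [hR2eq, Walk.length_reverse]
    have hR2sup : ∀ x ∈ R₂.support, x ∈ SB := by
      intro x hx
      rw [hR2eq, Walk.support_reverse, List.mem_reverse] at hx
      exact List.mem_toFinset.mpr (Walk.support_takeUntil_subset _ hmQ hx)
    have h_aℓ : R₁.length + R₂.length ≤ d := by
      have h1 : P.reverse.length = R₁.length + R₂.length := by
        rw [hsplit, Walk.length_append]
      have h2 : P.length = G.dist a ℓ := path_length_eq hacyc P hP
      rw [Walk.length_reverse] at h1
      rw [h1] at h2
      rw [h2]; exact hdle a ℓ
    have hWpath : ((Q.dropUntil m hmQ).reverse.append R₁.reverse).IsPath := by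
      refine isPath_append (hQ.dropUntil hmQ).reverse hR1.reverse ?_
      intro x hx1 hx2
      rw [Walk.support_reverse, List.mem_reverse] at hx1 hx2
      refine hfirst x hx2 (Finset.mem_coe.mpr ?_)
      exact List.mem_toFinset.mpr (Walk.support_dropUntil_subset _ hmQ hx1)
    have hWlen : (Q.dropUntil m hmQ).length + R₁.length ≤ d := by
      have h1 := path_length_eq hacyc _ hWpath
      rw [Walk.length_append, Walk.length_reverse, Walk.length_reverse] at h1
      rw [h1]; exact hdle b ℓ
    have hr : R₁.length ≤ d / 2 := by omega
    -- cardinality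
    have hsub : P.support.toFinset \ SB ⊆ R₁.support.toFinset.erase m := by
      intro x hx
      rw [Finset.mem_sdiff] at hx
      obtain ⟨hx1, hx2⟩ := hx
      have hxP : x ∈ P.reverse.support := by
        rw [Walk.support_reverse, List.mem_reverse]
        exact List.mem_toFinset.mp hx1
      rw [hsplit, Walk.mem_support_append_iff] at hxP
      rcases hxP with h | h
      · exact Finset.mem_erase.mpr ⟨fun he => hx2 (he ▸ Finset.mem_coe.mp hmSB),
          List.mem_toFinset.mpr h⟩
      · exact absurd (hR2sup x h) hx2
    have h1 : (R₁.support.toFinset.erase m).card = R₁.support.toFinset.card - 1 :=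
      Finset.card_erase_of_mem (List.mem_toFinset.mpr R₁.end_mem_support)
    have h2 : R₁.support.toFinset.card ≤ R₁.length + 1 := by
      calc R₁.support.toFinset.card ≤ R₁.support.length := List.toFinset_card_le _
        _ = R₁.length + 1 := Walk.length_support _
    have := Finset.card_le_card hsub
    omega
  -- canonical paths from a
  have pth : ∀ w, ∃ P : G.Walk a w, P.IsPath := fun w => (hT.existsUnique_path a w).exists
  choose PP hPP using pth
  -- leaves minus a b
  set L' := (L.erase b).erase a with hL'def
  have hbL : b ∈ L := by simp [hLdef, hbleaf]
  have haL : a ∈ L.erase b := Finset.mem_erase.mpr ⟨hanb, by simp [hLdef, haleaf]⟩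
  have hL' : L'.card = k - 2 := by
    rw [hL'def, Finset.card_erase_of_mem haL, Finset.card_erase_of_mem hbL, hL]
    omega
  -- covering
  have hcover : (Finset.univ : Finset V) ⊆
      SB ∪ L'.biUnion (fun ℓ => (PP ℓ).support.toFinset \ SB) := by
    intro v _
    by_cases hvSB : v ∈ SB
    · exact Finset.mem_union_left _ hvSB
    obtain ⟨ℓ, hℓdeg, P, hPpath, hvP⟩ := exists_leaf_path hT hcard2 a v
    have hPeq : P = PP ℓ :=
      congrArg Subtype.val (hacyc.path_unique ⟨P, hPpath⟩ ⟨PP ℓ, hPP ℓ⟩)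
    have hvPP : v ∈ (PP ℓ).support := hPeq ▸ hvP
    have hℓb : ℓ ≠ b := by
      rintro rfl
      have : PP ℓ = Q := congrArg Subtype.val (hacyc.path_unique ⟨PP ℓ, hPP ℓ⟩ ⟨Q, hQ⟩)
      exact hvSB (List.mem_toFinset.mpr (this ▸ hvPP))
    have hℓa : ℓ ≠ a := by
      rintro rfl
      have hnil : PP ℓ = Walk.nil := Walk.isPath_iff_eq_nil.mp (hPP ℓ)
      rw [hnil, Walk.support_nil, List.mem_singleton] at hvPP
      exact hvSB (hvPP ▸ haSB)
    have hℓL' : ℓ ∈ L' := by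
      rw [hL'def]
      exact Finset.mem_erase.mpr ⟨hℓa, Finset.mem_erase.mpr ⟨hℓb, by simp [hLdef, hℓdeg]⟩⟩
    exact Finset.mem_union_right _
      (Finset.mem_biUnion.mpr ⟨ℓ, hℓL', Finset.mem_sdiff.mpr ⟨List.mem_toFinset.mpr hvPP, hvSB⟩⟩)
  -- final count
  have hcount : Fintype.card V ≤ d + 1 + (k - 2) * (d / 2) := by
    calc Fintype.card V = (Finset.univ : Finset V).card := (Finset.card_univ).symm
      _ ≤ (SB ∪ L'.biUnion (fun ℓ => (PP ℓ).support.toFinset \ SB)).card :=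
          Finset.card_le_card hcover
      _ ≤ SB.card + (L'.biUnion (fun ℓ => (PP ℓ).support.toFinset \ SB)).card :=
          Finset.card_union_le _ _
      _ ≤ SB.card + ∑ ℓ ∈ L', ((PP ℓ).support.toFinset \ SB).card :=
          Nat.add_le_add_left (Finset.card_biUnion_le) _
      _ ≤ SB.card + L'.card * (d / 2) := by
          refine Nat.add_le_add_left ?_ _
          calc ∑ ℓ ∈ L', ((PP ℓ).support.toFinset \ SB).card
              ≤ L'.card • (d / 2) :=
                Finset.sum_le_card_nsmul _ _ _ (fun ℓ _ => key ℓ (PP ℓ) (hPP ℓ))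
            _ = L'.card * (d / 2) := smul_eq_mul ..
      _ = d + 1 + (k - 2) * (d / 2) := by rw [hSBcard, hL']
  -- Step A: steinerDiam ≤ n - 1
  have hstep : steinerDiam G k ≤ Fintype.card V - 1 := by
    apply Finset.sup_le
    intro S _
    apply Nat.sInf_le
    refine ⟨⊤, Subgraph.connected_iff'.mpr (Subgraph.topIso.connected_iff.mpr hconn), ?_, ?_⟩
    · simp
    · have h1 : (⊤ : G.Subgraph).edgeSet = G.edgeSet := Subgraph.edgeSet_top
      rw [h1]
      have h2 : G.edgeSet.ncard = G.edgeFinset.card := by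
        rw [Set.ncard_eq_toFinset_card', SimpleGraph.edgeFinset]
      rw [h2]
      have := hT.card_edgeFinset
      omega
  have hgoal : Fintype.card V - 1 ≤ d + (k - 2) * (d / 2) := by
    set t := (k - 2) * (d / 2)
    omega
  exact le_trans hstep hgoal
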